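/- For any two points x, x' ∈ ℝ^d, setting s = x' − x, y = ∇f(x') − ∇f(x), ŝ = H_*^{1/2}s, ŷ = H_*^{-1/2}y, σ = (M/μ^{3/2})‖H_*^{1/2}(x − x_*)‖, σ' = (M/μ^{3/2})‖H_*^{1/2}(x' − x_*)‖ and τ = max{σ, σ'}, one has ‖ŷ − ŝ‖ ≤ τ‖ŝ‖. -/

import Mathlib

noncomputable section

open Matrix Finset

abbrev E (d : ℕ) := EuclideanSpace ℝ (Fin d)
abbrev Mat (d : ℕ) := Matrix (Fin d) (Fin d) ℝ

/-- Spectral (operator 2-) norm of a real matrix. -/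
def spec {d : ℕ} (A : Mat d) : ℝ := ‖Matrix.toEuclideanCLM (𝕜 := ℝ) A‖

/-- Frobenius norm of a real matrix. -/
def frob {d : ℕ} (A : Mat d) : ℝ := Real.sqrt (∑ i, ∑ j, (A i j) ^ 2)

/-- A matrix acting on a Euclidean vector. -/
def mApp {d : ℕ} (A : Mat d) (v : E d) : E d := Matrix.toEuclideanCLM (𝕜 := ℝ) A v

/-- Outer product `u vᵀ`. -/
def outer {d : ℕ} (u v : E d) : Mat d := Matrix.of fun i j => u i * v j

/-- Euclidean dot product. -/
def dot {d : ℕ} (u v : E d) : ℝ := ∑ i, u i * v i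

/-- `σ(x) = (M/μ^{3/2})·‖H_*^{1/2}(x − x_*)‖`. -/
def sig {d : ℕ} (M μ : ℝ) (sqH : Mat d) (xs x : E d) : ℝ :=
  M / μ ^ ((3:ℝ)/2) * ‖mApp sqH (x - xs)‖

/-- `τ = max{σ(x), σ(x')}`. -/
def tauP {d : ℕ} (M μ : ℝ) (sqH : Mat d) (xs x x' : E d) : ℝ :=
  max (sig M μ sqH xs x) (sig M μ sqH xs x')

theorem weighted_secant_difference_bound
    {d : ℕ}
    (f : E d → ℝ) (g : E d → E d) (Hess : E d → Mat d) (xs : E d)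
    (μ L M : ℝ) (hμ : 0 < μ) (hμL : μ ≤ L) (hM : 0 < M)
    -- `g` is the gradient of `f`, and `Hess` its Hessian (so `f` is twice differentiable)
    (hg : ∀ x, HasGradientAt f (g x) x)
    (hHd : ∀ x, HasFDerivAt g (Matrix.toEuclideanCLM (𝕜 := ℝ) (Hess x)) x)
    -- `xs` is the unique minimizer of `f`
    (hmin : ∀ x, f xs ≤ f x)
    (huniq : ∀ x, (∀ y, f x ≤ f y) → x = xs)
    -- Assumption 1: strong convexity and gradient Lipschitz continuity
    (hgl : ∀ x y, μ * ‖x - y‖ ≤ ‖g x - g y‖)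
    (hgu : ∀ x y, ‖g x - g y‖ ≤ L * ‖x - y‖)
    (hHl : ∀ x v, μ * ‖v‖ ^ 2 ≤ dot v (mApp (Hess x) v))
    (hHu : ∀ x v, dot v (mApp (Hess x) v) ≤ L * ‖v‖ ^ 2)
    -- Assumption 2: Hessian Lipschitz continuity toward the optimum
    (hLip : ∀ x, spec (Hess x - Hess xs) ≤ M * ‖x - xs‖)
    -- `sqH` is the positive definite square root `H_*^{1/2}` of `H_* = ∇²f(x_*)`
    (sqH : Mat d) (hsqH : sqH.PosDef) (hsqH2 : sqH * sqH = Hess xs)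
    (x x' : E d) :
    ‖mApp sqH⁻¹ (g x' - g x) - mApp sqH (x' - x)‖ ≤
      tauP M μ sqH xs x x' * ‖mApp sqH (x' - x)‖ := by
  classical
  have hdet : IsUnit sqH.det := by
    simpa [isUnit_iff_ne_zero] using hsqH.det_pos.ne'
  have hsqμ : (0:ℝ) < Real.sqrt μ := Real.sqrt_pos.2 hμ
  have hdot : ∀ u v : E d, dot u v = (inner ℝ u v : ℝ) := by
    intro u v; simp [dot, PiLp.inner_apply, RCLike.inner_apply, mul_comm]
  have hsym : ∀ v w : E d, (inner ℝ v (mApp sqH w) : ℝ) = inner ℝ (mApp sqH v) w := by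
    intro v w
    have hst : star (Matrix.toEuclideanCLM (𝕜 := ℝ) sqH) = Matrix.toEuclideanCLM (𝕜 := ℝ) sqH := by
      rw [← map_star]
      congr 1
      rw [Matrix.star_eq_conjTranspose]
      exact hsqH.isHermitian
    rw [mApp, mApp, ← ContinuousLinearMap.adjoint_inner_left,
      ← ContinuousLinearMap.star_eq_adjoint, hst]
  -- lower bound on the action of sqH
  have hlow : ∀ v : E d, Real.sqrt μ * ‖v‖ ≤ ‖mApp sqH v‖ := by
    intro v
    have h1 : μ * ‖v‖ ^ 2 ≤ ‖mApp sqH v‖ ^ 2 := by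
      calc μ * ‖v‖ ^ 2 ≤ dot v (mApp (Hess xs) v) := hHl xs v
        _ = (inner ℝ v (mApp sqH (mApp sqH v)) : ℝ) := by
            rw [hdot]; congr 1; rw [← hsqH2]; simp [mApp, _root_.map_mul]
        _ = inner ℝ (mApp sqH v) (mApp sqH v) := hsym _ _
        _ = ‖mApp sqH v‖ ^ 2 := real_inner_self_eq_norm_sq _
    have h2 : (Real.sqrt μ * ‖v‖) ^ 2 ≤ ‖mApp sqH v‖ ^ 2 := by
      rw [mul_pow, Real.sq_sqrt hμ.le]; exact h1
    have h3 := Real.sqrt_le_sqrt h2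
    rwa [Real.sqrt_sq (by positivity), Real.sqrt_sq (norm_nonneg _)] at h3
  have hlow' : ∀ v : E d, ‖v‖ ≤ (Real.sqrt μ)⁻¹ * ‖mApp sqH v‖ := by
    intro v
    rw [inv_mul_eq_div, le_div_iff₀ hsqμ, mul_comm]
    exact hlow v
  -- upper bound on the action of sqH⁻¹
  have hinv : ∀ w : E d, ‖mApp sqH⁻¹ w‖ ≤ (Real.sqrt μ)⁻¹ * ‖w‖ := by
    intro w
    have key : mApp sqH (mApp sqH⁻¹ w) = w := by
      rw [show mApp sqH (mApp sqH⁻¹ w) = mApp (sqH * sqH⁻¹) w by simp [mApp, _root_.map_mul],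
        Matrix.mul_nonsing_inv _ hdet]
      simp [mApp]
    have h := hlow (mApp sqH⁻¹ w)
    rw [key] at h
    rw [inv_mul_eq_div, le_div_iff₀ hsqμ, mul_comm]
    exact h
  -- mean value inequality on the segment
  set C : ℝ := M * max ‖x - xs‖ ‖x' - xs‖ with hCdef
  have hC0 : 0 ≤ C := by positivity
  have hD : ‖g x' - g x - mApp (Hess xs) (x' - x)‖ ≤ C * ‖x' - x‖ := by
    have hb : ∀ z ∈ segment ℝ x x',
        ‖Matrix.toEuclideanCLM (𝕜 := ℝ) (Hess z) - Matrix.toEuclideanCLM (𝕜 := ℝ) (Hess xs)‖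
          ≤ C := by
      rintro z hz
      have hzs : ‖z - xs‖ ≤ max ‖x - xs‖ ‖x' - xs‖ := by
        obtain ⟨a, b, ha, hb', hab, rfl⟩ := hz
        have h0 : a • x + b • x' - xs = a • (x - xs) + b • (x' - xs) := by
          conv_lhs => rw [show xs = (a + b) • xs by rw [hab, one_smul]]
          module
        rw [h0]
        calc ‖a • (x - xs) + b • (x' - xs)‖ ≤ ‖a • (x - xs)‖ + ‖b • (x' - xs)‖ :=
              norm_add_le _ _
          _ = a * ‖x - xs‖ + b * ‖x' - xs‖ := by
              rw [norm_smul, norm_smul, Real.norm_eq_abs, Real.norm_eq_abs,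
                abs_of_nonneg ha, abs_of_nonneg hb']
          _ ≤ a * max ‖x - xs‖ ‖x' - xs‖ + b * max ‖x - xs‖ ‖x' - xs‖ := by
              gcongr
              · exact le_max_left _ _
              · exact le_max_right _ _
          _ = max ‖x - xs‖ ‖x' - xs‖ := by rw [← add_mul, hab, one_mul]
      calc ‖Matrix.toEuclideanCLM (𝕜 := ℝ) (Hess z) - Matrix.toEuclideanCLM (𝕜 := ℝ) (Hess xs)‖
          = spec (Hess z - Hess xs) := by rw [spec, map_sub]
        _ ≤ M * ‖z - xs‖ := hLip z
        _ ≤ C := by rw [hCdef]; gcongr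
    exact (convex_segment x x').norm_image_sub_le_of_norm_hasFDerivWithin_le'
      (fun z _ => (hHd z).hasFDerivWithinAt) hb
      (left_mem_segment ℝ x x') (right_mem_segment ℝ x x')
  -- rewrite the left-hand side
  have hrw : mApp sqH⁻¹ (g x' - g x) - mApp sqH (x' - x)
      = mApp sqH⁻¹ (g x' - g x - mApp (Hess xs) (x' - x)) := by
    have key2 : mApp sqH (x' - x) = mApp sqH⁻¹ (mApp (Hess xs) (x' - x)) := by
      rw [show mApp sqH⁻¹ (mApp (Hess xs) (x' - x)) = mApp (sqH⁻¹ * Hess xs) (x' - x) by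
          simp [mApp, _root_.map_mul], ← hsqH2, ← Matrix.mul_assoc,
        Matrix.nonsing_inv_mul _ hdet, Matrix.one_mul]
    rw [key2]
    simp only [mApp]
    exact (map_sub _ _ _).symm
  -- bound C by the weighted norms
  have hCb : C ≤ M * ((Real.sqrt μ)⁻¹ * max ‖mApp sqH (x - xs)‖ ‖mApp sqH (x' - xs)‖) := by
    rw [hCdef]
    gcongr
    apply max_le
    · exact (hlow' (x - xs)).trans (by gcongr; exact le_max_left _ _)
    · exact (hlow' (x' - xs)).trans (by gcongr; exact le_max_right _ _)
  have hpow : μ ^ ((3:ℝ)/2) = Real.sqrt μ ^ 3 := by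
    rw [Real.sqrt_eq_rpow, ← Real.rpow_natCast (μ ^ (1/(2:ℝ))) 3, ← Real.rpow_mul hμ.le]
    norm_num
  have htau : tauP M μ sqH xs x x'
      = M / μ ^ ((3:ℝ)/2) * max ‖mApp sqH (x - xs)‖ ‖mApp sqH (x' - xs)‖ := by
    have hc : 0 ≤ M / μ ^ ((3:ℝ)/2) := by positivity
    rw [tauP, sig, sig, mul_comm (M / μ ^ ((3:ℝ)/2)) ‖mApp sqH (x - xs)‖,
      mul_comm (M / μ ^ ((3:ℝ)/2)) ‖mApp sqH (x' - xs)‖,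
      ← max_mul_of_nonneg _ _ hc, mul_comm]
  calc ‖mApp sqH⁻¹ (g x' - g x) - mApp sqH (x' - x)‖
      = ‖mApp sqH⁻¹ (g x' - g x - mApp (Hess xs) (x' - x))‖ := by rw [hrw]
    _ ≤ (Real.sqrt μ)⁻¹ * ‖g x' - g x - mApp (Hess xs) (x' - x)‖ := hinv _
    _ ≤ (Real.sqrt μ)⁻¹ * (C * ‖x' - x‖) := by gcongr
    _ ≤ (Real.sqrt μ)⁻¹ * (C * ((Real.sqrt μ)⁻¹ * ‖mApp sqH (x' - x)‖)) := by
        gcongr; exact hlow' _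
    _ ≤ (Real.sqrt μ)⁻¹ * ((M * ((Real.sqrt μ)⁻¹ * max ‖mApp sqH (x - xs)‖ ‖mApp sqH (x' - xs)‖))
          * ((Real.sqrt μ)⁻¹ * ‖mApp sqH (x' - x)‖)) := by gcongr
    _ = M / μ ^ ((3:ℝ)/2) * max ‖mApp sqH (x - xs)‖ ‖mApp sqH (x' - xs)‖
          * ‖mApp sqH (x' - x)‖ := by
        rw [hpow, div_eq_mul_inv, pow_succ, pow_two, mul_inv, mul_inv]; ring
    _ = tauP M μ sqH xs x x' * ‖mApp sqH (x' - x)‖ := by rw [htau]
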